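/- Let κ and λ be infinite cardinals with κ < λ ≤ 2^κ. If for some (equivalently, every) set X of cardinality κ the poset 𝒫(X) contains a chain of cardinality ≥ λ, then there exists a linearly ordered set of cardinality ≥ λ which has a dense subset of cardinality κ. -/

import Mathlib

open Classical in
/-- A chain in `𝒫(X)` is linearly ordered by inclusion. -/
noncomputable def chainLinearOrder {X : Type u} (𝒜 : Set (Set X))
    (h : IsChain (· ⊆ ·) 𝒜) : LinearOrder 𝒜 :=
  { Subtype.partialOrder _ with
    le_total := fun a b => by
      rcases eq_or_ne a b with rfl | hne
      · exact Or.inl le_rfl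
      · exact h a.2 b.2 (fun hab => hne (Subtype.ext hab))
    toDecidableLE := fun _ _ => Classical.dec _
    toDecidableLT := fun _ _ => Classical.dec _ }

/-- Let κ and λ be infinite cardinals with κ < λ ≤ 2^κ. If for some set
X of cardinality κ the poset 𝒫(X) contains a chain of cardinality ≥ λ, then there
exists a linearly ordered set of cardinality ≥ λ which has a dense subset (one
meeting every nonempty open interval) of cardinality κ. -/
theorem dense_linear_order_of_chain (κ lam : Cardinal.{u})
    (hκ : Cardinal.aleph0 ≤ κ) (hκlam : κ < lam) (hlam : lam ≤ 2 ^ κ)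
    (hchain : ∃ (X : Type u), Cardinal.mk X = κ ∧
      ∃ 𝒜 : Set (Set X), IsChain (· ⊆ ·) 𝒜 ∧ lam ≤ Cardinal.mk 𝒜) :
    ∃ (L : Type u) (_ : LinearOrder L), lam ≤ Cardinal.mk L ∧
      ∃ D : Set L, Cardinal.mk D = κ ∧
        ∀ a b : L, a < b → (Set.Ioo a b).Nonempty → ∃ d ∈ D, a < d ∧ d < b := by
  classical
  obtain ⟨X, hX, 𝒜, hch, hcard⟩ := hchain
  refine ⟨𝒜, chainLinearOrder 𝒜 hch, hcard, ?_⟩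
  letI : LinearOrder 𝒜 := chainLinearOrder 𝒜 hch
  have hlampos : (0 : Cardinal) < lam := lt_of_le_of_lt (zero_le : (0 : Cardinal) ≤ κ) hκlam
  have hne : Nonempty 𝒜 := Cardinal.mk_ne_zero_iff.mp (lt_of_lt_of_le hlampos hcard).ne'
  haveI : Inhabited ↥𝒜 := Classical.inhabited_of_nonempty hne
  -- the selection function
  set P : X × X → Prop := fun p => ∃ C ∈ 𝒜, p.1 ∈ C ∧ p.2 ∉ C with hP
  set g : X × X → 𝒜 := fun p =>
    if h : P p then ⟨h.choose, h.choose_spec.1⟩ else default with hg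
  have hgspec : ∀ p : X × X, P p → p.1 ∈ (g p : Set X) ∧ p.2 ∉ (g p : Set X) := by
    intro p hp
    simp only [hg, dif_pos hp]
    exact hp.choose_spec.2
  -- a padding set of size κ
  have hκle : κ ≤ Cardinal.mk 𝒜 := hκlam.le.trans hcard
  obtain ⟨S, hS⟩ := Cardinal.le_mk_iff_exists_set.mp hκle
  refine ⟨Set.range g ∪ S, ?_, ?_⟩
  · apply le_antisymm
    · calc Cardinal.mk ↥(Set.range g ∪ S)
          ≤ Cardinal.mk ↥(Set.range g) + Cardinal.mk ↥S := Cardinal.mk_union_le _ _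
        _ ≤ Cardinal.mk (X × X) + κ := by
            gcongr
            · exact Cardinal.mk_range_le
            · exact hS.le
        _ = κ + κ := by rw [Cardinal.mk_prod, Cardinal.lift_id, hX,
            Cardinal.mul_eq_self hκ]
        _ = κ := Cardinal.add_eq_self hκ
    · rw [← hS]
      exact Cardinal.mk_le_mk_of_subset Set.subset_union_right
  · rintro a b hab ⟨c, hac, hcb⟩
    have hac' : (a : Set X) ⊆ c := hac.le
    have hcb' : (c : Set X) ⊆ b := hcb.le
    obtain ⟨x, hxc, hxa⟩ : ∃ x, x ∈ (c : Set X) ∧ x ∉ (a : Set X) :=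
      Set.not_subset.mp (fun h => (show a < c from hac).not_ge h)
    obtain ⟨y, hyb, hyc⟩ : ∃ y, y ∈ (b : Set X) ∧ y ∉ (c : Set X) :=
      Set.not_subset.mp (fun h => (show c < b from hcb).not_ge h)
    have hp : P (x, y) := ⟨c, c.2, hxc, hyc⟩
    obtain ⟨hxd, hyd⟩ := hgspec (x, y) hp
    refine ⟨g (x, y), Or.inl (Set.mem_range_self _), ?_, ?_⟩
    · rcases le_total (g (x, y)) a with h | h
      · exact absurd (h hxd) hxa
      · exact lt_of_le_of_ne h (fun heq => hxa (heq ▸ hxd))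
    · rcases le_total b (g (x, y)) with h | h
      · exact absurd (h hyb) hyd
      · exact lt_of_le_of_ne h (fun heq => hyd (heq ▸ hyb))
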